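/- Let R be a commutative ring, L a Lie algebra over R, M an R-module, and φ : L → End_R(M) an R-linear Lie algebra homomorphism. Fix x, y ∈ L and v, w ∈ M, and define sequences (y_n) in L and (m_n) in M by y_0 = y, m_0 = w, y_{n+1} = [x, y_n], and m_{n+1} = φ(x)(m_n) − φ(y_n)(v). Then for every n ∈ ℕ, y_n = (ad x)^n(y) and m_n = φ(x)^n(w) + Σ_{k=1}^{n} (-1)^k · C(n,k) · φ(x)^{n-k}( φ(y)( φ(x)^{k-1}(v) ) ). -/

import Mathlib

open Finset

attribute [local instance 100] LieRing.ofAssociativeRing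

/-- Componentwise formula for the iterated adjoint action in the semidirect product
`L ⋉ M`: with `y_0 = y`, `m_0 = w`, `y_{n+1} = ⁅x, y_n⁆`, `m_{n+1} = φ x (m_n) − φ (y_n) v`,
we have `y_n = (ad x)^n y` and
`m_n = φ(x)^n w + ∑_{k=1}^n (-1)^k C(n,k) • φ(x)^{n-k} (φ(y) (φ(x)^{k-1} v))`. -/
theorem stmt2 {R : Type*} [CommRing R] {L : Type*} [LieRing L] [LieAlgebra R L]
    {M : Type*} [AddCommGroup M] [Module R M]
    (φ : L →ₗ⁅R⁆ Module.End R M)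
    (x y : L) (v w : M) (ys : ℕ → L) (ms : ℕ → M)
    (hy0 : ys 0 = y) (hm0 : ms 0 = w)
    (hys : ∀ n, ys (n + 1) = ⁅x, ys n⁆)
    (hms : ∀ n, ms (n + 1) = φ x (ms n) - φ (ys n) v) :
    ∀ n : ℕ, ys n = (LieAlgebra.ad R L x ^ n) y ∧
      ms n = (φ x ^ n) w + ∑ k ∈ Finset.Icc 1 n,
        ((-1 : ℤ) ^ k * (n.choose k : ℤ)) • (φ x ^ (n - k)) (φ y ((φ x ^ (k - 1)) v)) := by
  have hY : ∀ n : ℕ, ys n = (LieAlgebra.ad R L x ^ n) y := by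
    intro n
    induction n with
    | zero => simpa using hy0
    | succ n ih =>
      rw [hys, ih, pow_succ', Module.End.mul_apply, LieAlgebra.ad_apply]
  have hcoef : ∀ (m : ℕ) (c : ℤ) (z : M), m • (c • z) = (c * (m : ℤ)) • z := by
    intro m c z
    rw [← natCast_zsmul, smul_smul, mul_comm]
  have hA : ∀ n : ℕ, ∀ u : M, φ (ys n) u =
      ∑ j ∈ Finset.range (n + 1), ((-1 : ℤ) ^ j * (n.choose j : ℤ)) •
        (φ x ^ (n - j)) (φ y ((φ x ^ j) u)) := by
    intro n
    induction n with
    | zero => intro u; simp [hy0]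
    | succ n ih =>
      intro u
      have hb : φ (ys (n + 1)) u = φ x (φ (ys n) u) - φ (ys n) (φ x u) := by
        rw [hys, LieHom.map_lie, Ring.lie_def, LinearMap.sub_apply, Module.End.mul_apply,
          Module.End.mul_apply]
      have hsplit := Finset.sum_choose_succ_nsmul
        (f := fun i j => ((-1 : ℤ) ^ i) • (φ x ^ j) (φ y ((φ x ^ i) u))) n
      have h1 : φ x (φ (ys n) u)
          = ∑ i ∈ Finset.range (n + 1),
              (n.choose i) • (((-1 : ℤ) ^ i) • (φ x ^ (n + 1 - i)) (φ y ((φ x ^ i) u))) := by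
        rw [ih u, map_sum]
        refine Finset.sum_congr rfl fun i hi => ?_
        rw [hcoef, map_zsmul]
        have hle : n + 1 - i = (n - i) + 1 := by
          have := Finset.mem_range.mp hi; omega
        rw [hle, pow_succ', Module.End.mul_apply]
      have h2 : (∑ i ∈ Finset.range (n + 1),
            (n.choose i) • (((-1 : ℤ) ^ (i + 1)) • (φ x ^ (n - i)) (φ y ((φ x ^ (i + 1)) u))))
          = - φ (ys n) (φ x u) := by
        rw [ih (φ x u), ← Finset.sum_neg_distrib]
        refine Finset.sum_congr rfl fun i hi => ?_
        rw [show (φ x ^ (i + 1)) u = (φ x ^ i) ((φ x) u) from by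
          rw [pow_succ, Module.End.mul_apply], hcoef, ← neg_smul]
        congr 1
        ring
      have hgoal : (∑ j ∈ Finset.range (n + 1 + 1), ((-1 : ℤ) ^ j * ((n + 1).choose j : ℤ)) •
            (φ x ^ (n + 1 - j)) (φ y ((φ x ^ j) u)))
          = ∑ j ∈ Finset.range (n + 2),
              ((n + 1).choose j) • (((-1 : ℤ) ^ j) • (φ x ^ (n + 1 - j)) (φ y ((φ x ^ j) u))) := by
        refine Finset.sum_congr rfl fun j hj => ?_
        rw [hcoef]
      rw [hb, hgoal, hsplit, h1, h2, sub_eq_add_neg]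
  have eIcc : ∀ (m : ℕ) (g : ℕ → M),
      (∑ k ∈ Finset.Icc 1 m, g k) = ∑ i ∈ Finset.range m, g (i + 1) := by
    intro m g
    rw [← Finset.Ico_add_one_right_eq_Icc, Finset.sum_Ico_eq_sum_range]
    exact Finset.sum_congr rfl fun i _ => by rw [Nat.add_comm]
  have hM : ∀ n : ℕ, ms n = (φ x ^ n) w + ∑ k ∈ Finset.Icc 1 n,
      ((-1 : ℤ) ^ k * (n.choose k : ℤ)) • (φ x ^ (n - k)) (φ y ((φ x ^ (k - 1)) v)) := by
    intro n
    induction n with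
    | zero => simpa using hm0
    | succ n ih =>
      have hw : φ x ((φ x ^ n) w) = (φ x ^ (n + 1)) w := by
        rw [pow_succ', Module.End.mul_apply]
      have hφS : φ x (∑ k ∈ Finset.Icc 1 n,
            ((-1 : ℤ) ^ k * (n.choose k : ℤ)) • (φ x ^ (n - k)) (φ y ((φ x ^ (k - 1)) v)))
          = ∑ i ∈ Finset.range n,
              ((-1 : ℤ) ^ (i + 1) * (n.choose (i + 1) : ℤ)) •
                (φ x ^ (n - i)) (φ y ((φ x ^ i) v)) := by
        rw [map_sum, eIcc]
        refine Finset.sum_congr rfl fun i hi => ?_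
        rw [map_zsmul]
        congr 1
        rw [Nat.add_sub_cancel]
        have hni : n - i = (n - (i + 1)) + 1 := by
          have := Finset.mem_range.mp hi; omega
        rw [hni, pow_succ', Module.End.mul_apply]
      have hS : (∑ k ∈ Finset.Icc 1 (n + 1), ((-1 : ℤ) ^ k * ((n + 1).choose k : ℤ)) •
            (φ x ^ (n + 1 - k)) (φ y ((φ x ^ (k - 1)) v)))
          = (∑ i ∈ Finset.range n, ((-1 : ℤ) ^ (i + 1) * (n.choose (i + 1) : ℤ)) •
              (φ x ^ (n - i)) (φ y ((φ x ^ i) v)))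
            - ∑ j ∈ Finset.range (n + 1), ((-1 : ℤ) ^ j * (n.choose j : ℤ)) •
                (φ x ^ (n - j)) (φ y ((φ x ^ j) v)) := by
        rw [eIcc]
        have step : ∀ i ∈ Finset.range (n + 1),
            ((-1 : ℤ) ^ (i + 1) * ((n + 1).choose (i + 1) : ℤ)) •
              (φ x ^ (n + 1 - (i + 1))) (φ y ((φ x ^ (i + 1 - 1)) v))
            = ((-1 : ℤ) ^ (i + 1) * (n.choose (i + 1) : ℤ)) •
                (φ x ^ (n - i)) (φ y ((φ x ^ i) v))
              + (-(((-1 : ℤ) ^ i * (n.choose i : ℤ)))) •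
                  (φ x ^ (n - i)) (φ y ((φ x ^ i) v)) := by
          intro i hi
          have h1 : n + 1 - (i + 1) = n - i := by omega
          rw [h1, Nat.add_sub_cancel, ← add_smul, Nat.choose_succ_succ]
          congr 1
          push_cast
          ring
        rw [Finset.sum_congr rfl step, Finset.sum_add_distrib, sub_eq_add_neg]
        congr 1
        · rw [Finset.sum_range_succ]
          simp
        · rw [← Finset.sum_neg_distrib]
          exact Finset.sum_congr rfl fun i _ => by rw [neg_smul]
      rw [hms, ih, hA n v, map_add, hφS, hS, hw]
      abel
  intro n
  exact ⟨hY n, hM n⟩
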